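/- Let S be a countable semigroup which is the disjoint union of subsemigroups S_i indexed by a finite linearly ordered set Y, such that for all i > j in Y and all s_i ∈ S_i, s_j ∈ S_j one has s_i·s_j = s_j = s_j·s_i. If each S_i is ℵ₀-categorical then S is ℵ₀-categorical. Moreover, if each S_i is a characteristic subset of S, then the converse holds: if S is ℵ₀-categorical then each S_i is ℵ₀-categorical. -/
import Mathlib

set_option linter.unusedSectionVars false
set_option maxHeartbeats 1000000

/-- Two `n`-tuples of a semigroup are automorphically equivalent if some semigroup
automorphism maps one to the other componentwise. -/
def AutRel (S : Type*) [Semigroup S] {n : ℕ} (a b : Fin n → S) : Prop :=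
  ∃ φ : S ≃* S, ∀ k, φ (a k) = b k

/-- A semigroup is ℵ₀-categorical if, for every `n ≥ 1`, the action of its automorphism
group on `n`-tuples has only finitely many orbits. -/
def Aleph0Categorical (S : Type*) [Semigroup S] : Prop :=
  ∀ n : ℕ, 1 ≤ n → ∃ t : Set (Fin n → S), t.Finite ∧
    ∀ a : Fin n → S, ∃ b ∈ t, AutRel S b a

/-- A subset of a semigroup is characteristic if it is invariant under all automorphisms. -/
def IsCharacteristic (S : Type*) [Semigroup S] (A : Set S) : Prop :=
  ∀ φ : S ≃* S, φ '' A = A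

section Chain

variable {S : Type*} [Semigroup S] {Y : Type*} [LinearOrder Y] (A : Y → Subsemigroup S)

noncomputable def chainIdx (hcover : (⋃ i : Y, (A i : Set S)) = Set.univ) (s : S) : Y :=
  (Set.mem_iUnion.mp (show s ∈ ⋃ i : Y, (A i : Set S) from hcover.symm ▸ Set.mem_univ s)).choose

lemma chainIdx_mem (hcover : (⋃ i : Y, (A i : Set S)) = Set.univ) (s : S) :
    s ∈ A (chainIdx A hcover s) :=
  (Set.mem_iUnion.mp (show s ∈ ⋃ i : Y, (A i : Set S) from hcover.symm ▸ Set.mem_univ s)).choose_spec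

lemma chainIdx_eq (hcover : (⋃ i : Y, (A i : Set S)) = Set.univ)
    (hdisj : ∀ i j : Y, i ≠ j → (A i : Set S) ∩ (A j : Set S) = ∅)
    {s : S} {i : Y} (hs : s ∈ A i) : chainIdx A hcover s = i := by
  by_contra h
  have hm : s ∈ (A (chainIdx A hcover s) : Set S) ∩ (A i : Set S) :=
    ⟨chainIdx_mem A hcover s, hs⟩
  rw [hdisj _ _ h] at hm
  exact hm

noncomputable def chainMap (hcover : (⋃ i : Y, (A i : Set S)) = Set.univ)
    (φ : ∀ i, A i ≃* A i) (s : S) : S :=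
  (φ (chainIdx A hcover s) ⟨s, chainIdx_mem A hcover s⟩ : S)

lemma chainMap_mem (hcover : (⋃ i : Y, (A i : Set S)) = Set.univ)
    (φ : ∀ i, A i ≃* A i) (s : S) :
    chainMap A hcover φ s ∈ A (chainIdx A hcover s) :=
  SetLike.coe_mem _

lemma chainMap_eq_of_mem (hcover : (⋃ i : Y, (A i : Set S)) = Set.univ)
    (hdisj : ∀ i j : Y, i ≠ j → (A i : Set S) ∩ (A j : Set S) = ∅)
    (φ : ∀ i, A i ≃* A i) {s : S} {i : Y} (hs : s ∈ A i) :
    chainMap A hcover φ s = (φ i ⟨s, hs⟩ : S) := by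
  have e : chainIdx A hcover s = i := chainIdx_eq A hcover hdisj hs
  unfold chainMap
  subst e
  rfl

lemma chainMap_inv (hcover : (⋃ i : Y, (A i : Set S)) = Set.univ)
    (hdisj : ∀ i j : Y, i ≠ j → (A i : Set S) ∩ (A j : Set S) = ∅)
    (φ : ∀ i, A i ≃* A i) (s : S) :
    chainMap A hcover (fun i => (φ i).symm) (chainMap A hcover φ s) = s := by
  have hs : s ∈ A (chainIdx A hcover s) := chainIdx_mem A hcover s
  have h1 : chainMap A hcover φ s = (φ (chainIdx A hcover s) ⟨s, hs⟩ : S) := rfl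
  have h2 : chainMap A hcover φ s ∈ A (chainIdx A hcover s) := chainMap_mem A hcover φ s
  rw [chainMap_eq_of_mem A hcover hdisj _ h2]
  have e : (⟨chainMap A hcover φ s, h2⟩ : A (chainIdx A hcover s)) =
      φ (chainIdx A hcover s) ⟨s, hs⟩ := Subtype.ext h1
  rw [e, MulEquiv.symm_apply_apply]

lemma chainMap_mul (hcover : (⋃ i : Y, (A i : Set S)) = Set.univ)
    (hdisj : ∀ i j : Y, i ≠ j → (A i : Set S) ∩ (A j : Set S) = ∅)
    (habs : ∀ i j : Y, j < i → ∀ s ∈ A i, ∀ t ∈ A j, s * t = t ∧ t * s = t)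
    (φ : ∀ i, A i ≃* A i) (s t : S) :
    chainMap A hcover φ (s * t) = chainMap A hcover φ s * chainMap A hcover φ t := by
  obtain ⟨i, hs⟩ : ∃ i, s ∈ A i := ⟨_, chainIdx_mem A hcover s⟩
  obtain ⟨j, ht⟩ : ∃ j, t ∈ A j := ⟨_, chainIdx_mem A hcover t⟩
  have hs' : chainMap A hcover φ s ∈ A i := by
    rw [chainMap_eq_of_mem A hcover hdisj φ hs]; exact SetLike.coe_mem _
  have ht' : chainMap A hcover φ t ∈ A j := by
    rw [chainMap_eq_of_mem A hcover hdisj φ ht]; exact SetLike.coe_mem _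
  rcases lt_trichotomy i j with h | h | h
  · have e1 : s * t = s := (habs j i h t ht s hs).2
    have e2 : chainMap A hcover φ s * chainMap A hcover φ t = chainMap A hcover φ s :=
      (habs j i h _ ht' _ hs').2
    rw [e1, e2]
  · subst h
    have hst : s * t ∈ A i := mul_mem hs ht
    rw [chainMap_eq_of_mem A hcover hdisj φ hst,
      chainMap_eq_of_mem A hcover hdisj φ hs,
      chainMap_eq_of_mem A hcover hdisj φ ht]
    have e : (⟨s * t, hst⟩ : A i) = ⟨s, hs⟩ * ⟨t, ht⟩ := rfl
    rw [e, map_mul]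
    rfl
  · have e1 : s * t = t := (habs i j h s hs t ht).1
    have e2 : chainMap A hcover φ s * chainMap A hcover φ t = chainMap A hcover φ t :=
      (habs i j h _ hs' _ ht').1
    rw [e1, e2]

/-- Combine a family of automorphisms of the pieces into an automorphism of `S`. -/
noncomputable def chainEquiv (hcover : (⋃ i : Y, (A i : Set S)) = Set.univ)
    (hdisj : ∀ i j : Y, i ≠ j → (A i : Set S) ∩ (A j : Set S) = ∅)
    (habs : ∀ i j : Y, j < i → ∀ s ∈ A i, ∀ t ∈ A j, s * t = t ∧ t * s = t)
    (φ : ∀ i, A i ≃* A i) : S ≃* S where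
  toFun := chainMap A hcover φ
  invFun := chainMap A hcover (fun i => (φ i).symm)
  left_inv s := chainMap_inv A hcover hdisj φ s
  right_inv s := by
    have := chainMap_inv A hcover hdisj (fun i => (φ i).symm) s
    simpa using this
  map_mul' s t := chainMap_mul A hcover hdisj habs φ s t

lemma chainEquiv_apply (hcover : (⋃ i : Y, (A i : Set S)) = Set.univ)
    (hdisj : ∀ i j : Y, i ≠ j → (A i : Set S) ∩ (A j : Set S) = ∅)
    (habs : ∀ i j : Y, j < i → ∀ s ∈ A i, ∀ t ∈ A j, s * t = t ∧ t * s = t)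
    (φ : ∀ i, A i ≃* A i) {s : S} {i : Y} (hs : s ∈ A i) :
    chainEquiv A hcover hdisj habs φ s = (φ i ⟨s, hs⟩ : S) :=
  chainMap_eq_of_mem A hcover hdisj φ hs

end Chain

/-- Restrict an automorphism of `S` to a characteristic subsemigroup. -/
noncomputable def charRestrict {S : Type*} [Semigroup S] (A : Subsemigroup S)
    (φ : S ≃* S) (h : φ '' (A : Set S) = A) : A ≃* A :=
  (φ.subsemigroupMap A).trans (MulEquiv.subsemigroupCongr (SetLike.ext' (by
    rw [Subsemigroup.coe_map]; simpa using h)))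

lemma charRestrict_apply {S : Type*} [Semigroup S] (A : Subsemigroup S)
    (φ : S ≃* S) (h : φ '' (A : Set S) = A) (x : A) :
    (charRestrict A φ h x : S) = φ x := rfl

/-- Let `S` be a countable semigroup which is the disjoint union of subsemigroups `A i`
indexed by a finite linearly ordered set `Y`, with `s * t = t = t * s` whenever
`s ∈ A i`, `t ∈ A j` and `j < i`.  If each `A i` is ℵ₀-categorical then so is `S`;
moreover if each `A i` is characteristic then the converse holds. -/
theorem aleph0Categorical_finite_chain (S : Type*) [Semigroup S] [Countable S]
    (Y : Type*) [LinearOrder Y] [Fintype Y] (A : Y → Subsemigroup S)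
    (hdisj : ∀ i j : Y, i ≠ j → (A i : Set S) ∩ (A j : Set S) = ∅)
    (hcover : (⋃ i : Y, (A i : Set S)) = Set.univ)
    (habs : ∀ i j : Y, j < i → ∀ s ∈ A i, ∀ t ∈ A j, s * t = t ∧ t * s = t) :
    ((∀ i : Y, Aleph0Categorical (A i)) → Aleph0Categorical S) ∧
    ((∀ i : Y, IsCharacteristic S (A i : Set S)) →
      Aleph0Categorical S → ∀ i : Y, Aleph0Categorical (A i)) := by
  constructor
  · -- each piece categorical → S categorical
    intro hcat n hn
    choose t ht hrep using fun i => hcat i n hn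
    set V : Set S := ⋃ i : Y, ⋃ x ∈ t i, Set.range (fun k => ((x k : A i) : S)) with hV
    have hVfin : V.Finite := Set.finite_iUnion fun i =>
      Set.Finite.biUnion (ht i) fun x _ => Set.finite_range _
    refine ⟨{c : Fin n → S | ∀ k, c k ∈ V}, ?_, ?_⟩
    · have e : {c : Fin n → S | ∀ k, c k ∈ V} = Set.pi Set.univ (fun _ : Fin n => V) := by
        ext c; simp [Set.mem_pi]
      rw [e]
      exact Set.Finite.pi fun _ => hVfin
    · intro a
      set τ : Fin n → Y := fun k => chainIdx A hcover (a k) with hτ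
      have hmem : ∀ k, a k ∈ A (τ k) := fun k => chainIdx_mem A hcover (a k)
      have H : ∀ i : Y, (∃ k, τ k = i) → ∃ x, x ∈ t i ∧ ∃ ψ : A i ≃* A i,
          ∀ m, ∀ _ : τ m = i, (ψ (x m) : S) = a m := by
        intro i hne
        obtain ⟨k₀, hk₀⟩ := hne
        set aA : Fin n → A i := fun m =>
          if hm : τ m = i then ⟨a m, hm ▸ hmem m⟩ else ⟨a k₀, hk₀ ▸ hmem k₀⟩ with haA
        obtain ⟨x, hx, ψ, hψ⟩ := hrep i aA
        refine ⟨x, hx, ψ, fun m hm => ?_⟩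
        rw [hψ m]
        simp only [haA, dif_pos hm]
      choose X hX Ψ hΨ using H
      set ψf : ∀ i, A i ≃* A i := fun i =>
        if h : ∃ k, τ k = i then Ψ i h else MulEquiv.refl (A i) with hψf
      set c : Fin n → S := fun k => ((X (τ k) ⟨k, rfl⟩ k : A (τ k)) : S) with hc
      refine ⟨c, fun k => ?_, chainEquiv A hcover hdisj habs ψf, fun k => ?_⟩
      · exact Set.mem_iUnion.mpr ⟨τ k, Set.mem_biUnion (hX (τ k) ⟨k, rfl⟩) ⟨k, rfl⟩⟩
      · have hck : c k ∈ A (τ k) := SetLike.coe_mem _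
        rw [chainEquiv_apply A hcover hdisj habs ψf hck]
        have e1 : ψf (τ k) = Ψ (τ k) ⟨k, rfl⟩ := dif_pos ⟨k, rfl⟩
        rw [e1]
        have e2 : (⟨c k, hck⟩ : A (τ k)) = X (τ k) ⟨k, rfl⟩ k := Subtype.ext rfl
        rw [e2]
        exact hΨ (τ k) ⟨k, rfl⟩ k rfl
  · -- converse, assuming each piece is characteristic
    intro hchar hScat i n hn
    obtain ⟨t, ht, hrep⟩ := hScat n hn
    set W : Set S := ⋃ b ∈ t, Set.range b with hW
    have hWfin : W.Finite := Set.Finite.biUnion ht fun b _ => Set.finite_range b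
    refine ⟨{c : Fin n → A i | ∀ k, (c k : S) ∈ W}, ?_, ?_⟩
    · have hpre : (Subtype.val ⁻¹' W : Set (A i)).Finite :=
        hWfin.preimage (Subtype.val_injective.injOn)
      have e : {c : Fin n → A i | ∀ k, (c k : S) ∈ W} =
          Set.pi Set.univ (fun _ : Fin n => (Subtype.val ⁻¹' W : Set (A i))) := by
        ext c; simp [Set.mem_pi]
      rw [e]
      exact Set.Finite.pi fun _ => hpre
    · intro a
      obtain ⟨b, hb, φ, hφ⟩ := hrep (fun k => (a k : S))
      have hmem : ∀ k, b k ∈ A i := by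
        intro k
        have h1 : (a k : S) ∈ φ '' (A i : Set S) := (hchar i φ).symm ▸ (a k).2
        obtain ⟨y, hy, hyk⟩ := h1
        have h2 : b k = y := φ.injective (by rw [hφ k, hyk])
        rw [h2]; exact hy
      refine ⟨fun k => ⟨b k, hmem k⟩, fun k => Set.mem_biUnion hb ⟨k, rfl⟩,
        charRestrict (A i) φ (hchar i φ), fun k => ?_⟩
      exact Subtype.ext (hφ k)
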